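/- Suppose H_d = H_k with d = k·p for a prime p, and z divides k with p not dividing z. Then k/z = gcd(k, d/z), and consequently H_{d/z} = H_{k/z}. -/

import Mathlib

def geoRels (d : ℕ) : Set (FreeGroup (Fin 3)) :=
  {(FreeGroup.of 0)^2, (FreeGroup.of 1)^2, (FreeGroup.of 2)^2,
   (FreeGroup.of 0 * FreeGroup.of 1)^3, (FreeGroup.of 0 * FreeGroup.of 2)^2,
   (FreeGroup.of 1 * FreeGroup.of 2)^d,
   (FreeGroup.of 1 * FreeGroup.of 0 * FreeGroup.of 2)^d}

abbrev H (d : ℕ) := PresentedGroup (geoRels d)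

/-- `H_d = H_k`: the identity map on generators induces an isomorphism. -/
def HEq' (d k : ℕ) : Prop :=
  ∃ φ : H d →* H k,
    (∀ i : Fin 3, φ (PresentedGroup.of i) = PresentedGroup.of i) ∧
    Function.Bijective φ

namespace GeoAux

open PresentedGroup

lemma mk_rel_eq_one {d : ℕ} {r : FreeGroup (Fin 3)} (hr : r ∈ geoRels d) :
    PresentedGroup.mk (geoRels d) r = 1 := by
  have hmem : r ∈ Subgroup.normalClosure (geoRels d) := Subgroup.subset_normalClosure hr
  exact (QuotientGroup.eq_one_iff r).mpr hmem

lemma rel0 (t : ℕ) : (PresentedGroup.of 0 : H t) ^ 2 = 1 := by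
  have := mk_rel_eq_one (d := t) (r := (FreeGroup.of 0)^2) (by simp [geoRels])
  rwa [map_pow] at this

lemma rel1 (t : ℕ) : (PresentedGroup.of 1 : H t) ^ 2 = 1 := by
  have := mk_rel_eq_one (d := t) (r := (FreeGroup.of 1)^2) (by simp [geoRels])
  rwa [map_pow] at this

lemma rel2 (t : ℕ) : (PresentedGroup.of 2 : H t) ^ 2 = 1 := by
  have := mk_rel_eq_one (d := t) (r := (FreeGroup.of 2)^2) (by simp [geoRels])
  rwa [map_pow] at this

lemma rel01 (t : ℕ) : ((PresentedGroup.of 0 : H t) * PresentedGroup.of 1) ^ 3 = 1 := by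
  have := mk_rel_eq_one (d := t) (r := (FreeGroup.of 0 * FreeGroup.of 1)^3) (by simp [geoRels])
  rwa [map_pow, map_mul] at this

lemma rel02 (t : ℕ) : ((PresentedGroup.of 0 : H t) * PresentedGroup.of 2) ^ 2 = 1 := by
  have := mk_rel_eq_one (d := t) (r := (FreeGroup.of 0 * FreeGroup.of 2)^2) (by simp [geoRels])
  rwa [map_pow, map_mul] at this

lemma relbc (t : ℕ) : ((PresentedGroup.of 1 : H t) * PresentedGroup.of 2) ^ t = 1 := by
  have := mk_rel_eq_one (d := t) (r := (FreeGroup.of 1 * FreeGroup.of 2)^t) (by simp [geoRels])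
  rwa [map_pow, map_mul] at this

lemma relbac (t : ℕ) :
    ((PresentedGroup.of 1 : H t) * PresentedGroup.of 0 * PresentedGroup.of 2) ^ t = 1 := by
  have := mk_rel_eq_one (d := t)
    (r := (FreeGroup.of 1 * FreeGroup.of 0 * FreeGroup.of 2)^t) (by simp [geoRels])
  rwa [map_pow, map_mul, map_mul] at this

lemma hom_exists {a t : ℕ}
    (h1 : ((PresentedGroup.of 1 : H t) * PresentedGroup.of 2) ^ a = 1)
    (h2 : ((PresentedGroup.of 1 : H t) * PresentedGroup.of 0 * PresentedGroup.of 2) ^ a = 1) :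
    ∃ φ : H a →* H t, ∀ i : Fin 3, φ (PresentedGroup.of i) = PresentedGroup.of i := by
  have key : ∀ r ∈ geoRels a, FreeGroup.lift (PresentedGroup.of : Fin 3 → H t) r = 1 := by
    intro r hr
    simp only [geoRels, Set.mem_insert_iff, Set.mem_singleton_iff] at hr
    rcases hr with rfl | rfl | rfl | rfl | rfl | rfl | rfl <;>
      simp only [map_pow, map_mul, FreeGroup.lift_apply_of]
    · exact rel0 t
    · exact rel1 t
    · exact rel2 t
    · exact rel01 t
    · exact rel02 t
    · exact h1
    · exact h2
  exact ⟨PresentedGroup.toGroup key, fun i => PresentedGroup.toGroup.of key⟩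

lemma nat_hom {a b : ℕ} (hab : a ∣ b) :
    ∃ φ : H b →* H a, ∀ i : Fin 3, φ (PresentedGroup.of i) = PresentedGroup.of i := by
  obtain ⟨c, rfl⟩ := hab
  refine hom_exists ?_ ?_
  · rw [pow_mul, relbc, one_pow]
  · rw [pow_mul, relbac, one_pow]

end GeoAux

/-- If `H_d = H_k` with `d = k·p` for a prime `p`, and `z ∣ k` with
`p ∤ z`, then `k/z = gcd(k, d/z)` and consequently `H_{d/z} = H_{k/z}`. -/
theorem reduce_by_common_factor (d k p z : ℕ) (hp : p.Prime) (hd : d = k * p)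
    (hz : z ∣ k) (hpz : ¬ p ∣ z) (h : HEq' d k) :
    k / z = Nat.gcd k (d / z) ∧ HEq' (d / z) (k / z) := by
  have hz0 : z ≠ 0 := by rintro rfl; exact hpz (dvd_zero p)
  obtain ⟨m, hm⟩ := hz
  subst hm hd
  have hkz : z * m / z = m := Nat.mul_div_cancel_left m (Nat.pos_of_ne_zero hz0)
  have hdz : z * m * p / z = m * p := by
    rw [mul_assoc, Nat.mul_div_cancel_left _ (Nat.pos_of_ne_zero hz0)]
  have hcop : Nat.gcd z p = 1 := Nat.Coprime.gcd_eq_one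
    ((hp.coprime_iff_not_dvd.mpr hpz).symm)
  have hgcd : Nat.gcd (z * m) (m * p) = m := by
    rw [mul_comm z m, Nat.gcd_mul_left, hcop, mul_one]
  rw [hkz, hdz]
  refine ⟨hgcd.symm, ?_⟩
  -- group part
  obtain ⟨φ, hφ, hinj, _⟩ := h
  -- in H (z*m*p), the k-th power relations hold
  have hbc_d : ((PresentedGroup.of 1 : H (z*m*p)) * PresentedGroup.of 2) ^ (z*m) = 1 := by
    apply hinj
    rw [map_one, map_pow, map_mul, hφ, hφ]
    exact GeoAux.relbc (z*m)
  have hbac_d : ((PresentedGroup.of 1 : H (z*m*p)) * PresentedGroup.of 0 *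
      PresentedGroup.of 2) ^ (z*m) = 1 := by
    apply hinj
    rw [map_one, map_pow, map_mul, map_mul, hφ, hφ, hφ]
    exact GeoAux.relbac (z*m)
  -- natural surjection ρ : H (z*m*p) →* H (m*p)
  obtain ⟨ρ, hρ⟩ := GeoAux.nat_hom (a := m*p) (b := z*m*p)
    ⟨z, by ring⟩
  have hbc_mp : ((PresentedGroup.of 1 : H (m*p)) * PresentedGroup.of 2) ^ (z*m) = 1 := by
    have := congrArg ρ hbc_d
    rwa [map_one, map_pow, map_mul, hρ, hρ] at this
  have hbac_mp : ((PresentedGroup.of 1 : H (m*p)) * PresentedGroup.of 0 *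
      PresentedGroup.of 2) ^ (z*m) = 1 := by
    have := congrArg ρ hbac_d
    rwa [map_one, map_pow, map_mul, map_mul, hρ, hρ, hρ] at this
  -- the m-th power relations hold in H (m*p)
  have hbc_m : ((PresentedGroup.of 1 : H (m*p)) * PresentedGroup.of 2) ^ m = 1 := by
    have := pow_gcd_eq_one.mpr ⟨hbc_mp, GeoAux.relbc (m*p)⟩
    rwa [hgcd] at this
  have hbac_m : ((PresentedGroup.of 1 : H (m*p)) * PresentedGroup.of 0 *
      PresentedGroup.of 2) ^ m = 1 := by
    have := pow_gcd_eq_one.mpr ⟨hbac_mp, GeoAux.relbac (m*p)⟩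
    rwa [hgcd] at this
  obtain ⟨α, hα⟩ := GeoAux.nat_hom (a := m) (b := m*p) ⟨p, rfl⟩
  obtain ⟨β, hβ⟩ := GeoAux.hom_exists hbc_m hbac_m
  have hβα : β.comp α = MonoidHom.id (H (m*p)) := by
    apply PresentedGroup.ext
    intro i
    simp [MonoidHom.comp_apply, hα, hβ]
  have hαβ : α.comp β = MonoidHom.id (H m) := by
    apply PresentedGroup.ext
    intro i
    simp [MonoidHom.comp_apply, hα, hβ]
  refine ⟨α, hα, ?_⟩
  rw [Function.bijective_iff_has_inverse]
  exact ⟨β, fun x => DFunLike.congr_fun hβα x, fun x => DFunLike.congr_fun hαβ x⟩
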